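/- Let n ≥ 2, let w_1, …, w_n ∈ ℝ² satisfy [w_1, w_i] > 0 for all 2 ≤ i ≤ n, and let α_1, …, α_n be real numbers with α_i > 1 for all i. Then Σ_{i=1}^n w_i ≠ Σ_{i=1}^n α_i w_i. -/
import Mathlib


open scoped BigOperators

/-- `det2 v w` is the determinant of the 2×2 matrix with columns `v, w ∈ ℝ²`. -/
noncomputable def det2 (v w : ℝ × ℝ) : ℝ := v.1 * w.2 - v.2 * w.1

/-- If `n ≥ 2`, `[w₁, wᵢ] > 0` for `2 ≤ i ≤ n`, and `αᵢ > 1` for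
`1 ≤ i ≤ n`, then `Σ wᵢ ≠ Σ αᵢ wᵢ`. -/
theorem statement4 {n : ℕ} (hn : 2 ≤ n) (w : ℕ → ℝ × ℝ) (α : ℕ → ℝ)
    (hw : ∀ i : ℕ, 2 ≤ i → i ≤ n → 0 < det2 (w 1) (w i))
    (hα : ∀ i : ℕ, 1 ≤ i → i ≤ n → 1 < α i) :
    ∑ i ∈ Finset.Icc 1 n, w i ≠ ∑ i ∈ Finset.Icc 1 n, α i • w i := by
  intro h
  have h1 := congrArg Prod.fst h
  have h2 := congrArg Prod.snd h
  simp only [Prod.fst_sum, Prod.snd_sum, Prod.smul_fst, Prod.smul_snd, smul_eq_mul] at h1 h2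
  have key : ∑ i ∈ Finset.Icc 1 n, (α i - 1) * det2 (w 1) (w i) = 0 := by
    have expand : ∀ i ∈ Finset.Icc 1 n,
        (α i - 1) * det2 (w 1) (w i)
        = ((w 1).1 * (α i * (w i).2) - (w 1).1 * (w i).2)
          - ((w 1).2 * (α i * (w i).1) - (w 1).2 * (w i).1) := by
      intro i _; simp only [det2]; ring
    rw [Finset.sum_congr rfl expand, Finset.sum_sub_distrib, Finset.sum_sub_distrib,
      Finset.sum_sub_distrib, ← Finset.mul_sum, ← Finset.mul_sum, ← Finset.mul_sum,
      ← Finset.mul_sum, ← h1, ← h2]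
    ring
  have hpos : 0 < ∑ i ∈ Finset.Icc 1 n, (α i - 1) * det2 (w 1) (w i) := by
    have h2mem : (2 : ℕ) ∈ Finset.Icc 1 n := Finset.mem_Icc.mpr ⟨one_le_two, hn⟩
    refine Finset.sum_pos' ?_ ⟨2, h2mem, ?_⟩
    · intro i hi
      rw [Finset.mem_Icc] at hi
      rcases eq_or_lt_of_le hi.1 with h1i | h1i
      · have : det2 (w 1) (w i) = 0 := by rw [← h1i]; simp [det2]; ring
        simp [this]
      · exact le_of_lt (mul_pos (by linarith [hα i hi.1 hi.2]) (hw i h1i hi.2))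
    · exact mul_pos (by linarith [hα 2 one_le_two hn]) (hw 2 le_rfl hn)
  exact hpos.ne' key
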